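/- Under the pointwise injectivity assumption that a ↦ Π_x^a is injective for m^π-almost every x, any Bayes rule in the prior disclosure game with strictly proper score S must satisfy δ(x) = π for m^π-almost every x; i.e., the truth-telling rule is the essentially unique Bayes rule. -/

import Mathlib

open Finset

/-- `p` is a probability mass function on the finite set `Ω`. -/
def IsPMF {Ω : Type*} [Fintype Ω] (p : Ω → ℝ) : Prop :=
  (∀ a, 0 ≤ p a) ∧ ∑ a, p a = 1

/-- A scoring rule `S` on pmfs over `Ω` is strictly proper. -/
def StrictlyProper {Ω : Type*} [Fintype Ω] (S : (Ω → ℝ) → Ω → ℝ) : Prop :=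
  ∀ p q : Ω → ℝ, IsPMF p → IsPMF q →
    (∑ y, p y * S q y ≤ ∑ y, p y * S p y) ∧
    ((∑ y, p y * S q y = ∑ y, p y * S p y) → q = p)

/-- Prior predictive (marginal) distribution of the data. -/
noncomputable def priorPred {Ω 𝒳 : Type*} [Fintype Ω]
    (P : Ω → 𝒳 → ℝ) (π : Ω → ℝ) (x : 𝒳) : ℝ :=
  ∑ θ, π θ * P θ x

/-- Posterior distribution over `Ω` given `X = x`, under prior `a`. -/
noncomputable def post {Ω 𝒳 : Type*} [Fintype Ω]
    (P : Ω → 𝒳 → ℝ) (a : Ω → ℝ) (x : 𝒳) (θ : Ω) : ℝ :=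
  a θ * P θ x / priorPred P a x

/-- Frequentist risk of decision rule `δ` at `θ` in the prior disclosure game. -/
noncomputable def freqRisk {Ω 𝒳 : Type*} [Fintype Ω] [Fintype 𝒳]
    (S : (Ω → ℝ) → Ω → ℝ) (P : Ω → 𝒳 → ℝ) (δ : 𝒳 → Ω → ℝ) (θ : Ω) : ℝ :=
  ∑ x, P θ x * (-(S (post P (δ x) x) θ))

/-- Bayes risk of decision rule `δ` under prior `π` in the prior disclosure game. -/
noncomputable def bayesRisk {Ω 𝒳 : Type*} [Fintype Ω] [Fintype 𝒳]
    (S : (Ω → ℝ) → Ω → ℝ) (P : Ω → 𝒳 → ℝ) (δ : 𝒳 → Ω → ℝ) (π : Ω → ℝ) : ℝ :=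
  ∑ θ, π θ * freqRisk S P δ θ

/-- Minimum Bayes risk over all (pmf-valued) decision rules. -/
noncomputable def minBayesRisk {Ω 𝒳 : Type*} [Fintype Ω] [Fintype 𝒳]
    (S : (Ω → ℝ) → Ω → ℝ) (P : Ω → 𝒳 → ℝ) (π : Ω → ℝ) : ℝ :=
  sInf {r | ∃ δ : 𝒳 → Ω → ℝ, (∀ x, IsPMF (δ x)) ∧ r = bayesRisk S P δ π}

/-- Generalized entropy associated with the scoring rule `S`. -/
noncomputable def genEntropy {Ω : Type*} [Fintype Ω]
    (S : (Ω → ℝ) → Ω → ℝ) (p : Ω → ℝ) : ℝ :=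
  -∑ y, p y * S p y

/-- Score divergence associated with the scoring rule `S`. -/
noncomputable def scoreDiv {Ω : Type*} [Fintype Ω]
    (S : (Ω → ℝ) → Ω → ℝ) (p q : Ω → ℝ) : ℝ :=
  ∑ y, p y * (S p y - S q y)

lemma exists_pos_of_pmf {Ω : Type*} [Fintype Ω] {p : Ω → ℝ} (hp : IsPMF p) :
    ∃ θ, 0 < p θ := by
  by_contra h
  push_neg at h
  have h0 : ∑ θ, p θ = 0 := Finset.sum_eq_zero (fun θ _ => le_antisymm (h θ) (hp.1 θ))
  rw [hp.2] at h0; norm_num at h0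

lemma priorPred_pos {Ω 𝒳 : Type*} [Fintype Ω] {P : Ω → 𝒳 → ℝ} {a : Ω → ℝ}
    (ha : IsPMF a) (hPpos : ∀ θ x, 0 < P θ x) (x : 𝒳) : 0 < priorPred P a x := by
  obtain ⟨θ0, hθ0⟩ := exists_pos_of_pmf ha
  exact Finset.sum_pos' (fun θ _ => mul_nonneg (ha.1 θ) (hPpos θ x).le)
    ⟨θ0, Finset.mem_univ _, mul_pos hθ0 (hPpos θ0 x)⟩

lemma post_pmf {Ω 𝒳 : Type*} [Fintype Ω] {P : Ω → 𝒳 → ℝ} {a : Ω → ℝ}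
    (ha : IsPMF a) (hPpos : ∀ θ x, 0 < P θ x) (x : 𝒳) : IsPMF (post P a x) := by
  have hm := priorPred_pos ha hPpos x
  constructor
  · intro θ; exact div_nonneg (mul_nonneg (ha.1 θ) (hPpos θ x).le) hm.le
  · unfold post
    rw [← Finset.sum_div, div_eq_one_iff_eq (ne_of_gt hm)]
    rfl

/-- Under the pointwise injectivity assumption that `a ↦ Π_x^a` is injective for
`m^π`-almost every `x`, any Bayes rule in the prior disclosure game with strictly proper score
`S` satisfies `δ(x) = π` for `m^π`-almost every `x`: truth-telling is the essentially unique
Bayes rule. -/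
theorem truth_telling_unique
    {Ω 𝒳 : Type*} [Fintype Ω] [Fintype 𝒳]
    (S : (Ω → ℝ) → Ω → ℝ) (hS : StrictlyProper S)
    (P : Ω → 𝒳 → ℝ) (hP : ∀ θ, IsPMF (P θ)) (hPpos : ∀ θ x, 0 < P θ x)
    (π : Ω → ℝ) (hπ : IsPMF π)
    (hinj : ∀ x : 𝒳, 0 < priorPred P π x →
      Set.InjOn (fun a : Ω → ℝ => post P a x) {a | IsPMF a})
    (δ : 𝒳 → Ω → ℝ) (hδ : ∀ x, IsPMF (δ x))
    (hBayes : ∀ δ' : 𝒳 → Ω → ℝ, (∀ x, IsPMF (δ' x)) →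
      bayesRisk S P δ π ≤ bayesRisk S P δ' π) :
    ∀ x : 𝒳, 0 < priorPred P π x → δ x = π := by
  intro x hx
  have hmπ : ∀ y, 0 < priorPred P π y := fun y => priorPred_pos hπ hPpos y
  have hrisk : ∀ ε : 𝒳 → Ω → ℝ, bayesRisk S P ε π
      = ∑ y, ∑ θ, π θ * P θ y * (-(S (post P (ε y) y) θ)) := by
    intro ε
    unfold bayesRisk freqRisk
    simp_rw [Finset.mul_sum, ← mul_assoc]
    exact Finset.sum_comm
  have hrewrite : ∀ (q : Ω → ℝ) (y : 𝒳), (∑ θ, π θ * P θ y * (-(S q θ)))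
      = priorPred P π y * ∑ θ, post P π y θ * (-(S q θ)) := by
    intro q y
    rw [Finset.mul_sum]
    refine Finset.sum_congr rfl (fun θ _ => ?_)
    unfold post
    have := (hmπ y).ne'
    field_simp
  set f : 𝒳 → ℝ := fun y => ∑ θ, π θ * P θ y * (-(S (post P (δ y) y) θ)) with hf
  set g : 𝒳 → ℝ := fun y => ∑ θ, π θ * P θ y * (-(S (post P π y) θ)) with hg
  have hineq : ∀ y, g y ≤ f y := by
    intro y
    simp only [hf, hg]
    rw [hrewrite, hrewrite]
    refine mul_le_mul_of_nonneg_left ?_ (hmπ y).le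
    have hp := post_pmf hπ hPpos y
    have hq := post_pmf (hδ y) hPpos y
    have h1 := (hS (post P π y) (post P (δ y) y) hp hq).1
    simp only [mul_neg, Finset.sum_neg_distrib]
    linarith
  have hsum : ∑ y, f y ≤ ∑ y, g y := by
    have h1 := hBayes (fun _ => π) (fun _ => hπ)
    rw [hrisk δ, hrisk (fun _ => π)] at h1
    exact h1
  have heq : f x = g x := by
    have hle : ∑ y, g y ≤ ∑ y, f y := Finset.sum_le_sum (fun y _ => hineq y)
    have hsumeq : ∑ y, f y = ∑ y, g y := le_antisymm hsum hle
    have h0 : ∑ y, (f y - g y) = 0 := by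
      rw [Finset.sum_sub_distrib, hsumeq, sub_self]
    have h2 := (Finset.sum_eq_zero_iff_of_nonneg
      (fun y _ => sub_nonneg.mpr (hineq y))).mp h0 x (Finset.mem_univ x)
    linarith [sub_eq_zero.mp h2]
  have hp := post_pmf hπ hPpos x
  have hq := post_pmf (hδ x) hPpos x
  have hscore : ∑ θ, post P π x θ * S (post P (δ x) x) θ
      = ∑ θ, post P π x θ * S (post P π x) θ := by
    have h1 : priorPred P π x * ∑ θ, post P π x θ * (-(S (post P (δ x) x) θ))
        = priorPred P π x * ∑ θ, post P π x θ * (-(S (post P π x) θ)) := by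
      rw [← hrewrite, ← hrewrite]
      exact heq
    have h2 := mul_left_cancel₀ (hmπ x).ne' h1
    simp only [mul_neg, Finset.sum_neg_distrib, neg_inj] at h2
    exact h2
  have hqp := (hS (post P π x) (post P (δ x) x) hp hq).2 hscore
  exact hinj x hx (hδ x) hπ hqp
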